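/- Let C : ℝ → ℝⁿ be an arclength-parametrized purely rotating soliton (C'' = AC + λC', A antisymmetric, λ = -⟨C', AC⟩), and let Z = Π_{ker A}∘C. Suppose λ(s) ≥ 0 for all s and Z'(s₀) ≠ 0 for some s₀. Then ∫_{s₀}^∞ λ(s) ds ≤ -ln‖Z'(s₀)‖ < ∞, and lim_{s→∞} λ(s) = 0. -/

import Mathlib

open Matrix Filter
open scoped RealInnerProductSpace

set_option maxHeartbeats 1000000 in
theorem stmt14 (n : ℕ) (A : Matrix (Fin n) (Fin n) ℝ) (hA : Aᵀ = -A)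
    (C : ℝ → EuclideanSpace ℝ (Fin n)) (lam : ℝ → ℝ)
    (hC : ContDiff ℝ 2 C)
    (harc : ∀ s, ‖deriv C s‖ = 1)
    (hlam : ∀ s, lam s = -⟪deriv C s, A.toEuclideanLin (C s)⟫)
    (heq : ∀ s, deriv (deriv C) s
      = A.toEuclideanLin (C s) + lam s • deriv C s)
    (Z : ℝ → EuclideanSpace ℝ (Fin n))
    (hZ : ∀ s, Z s =
      (Submodule.orthogonalProjectionOnto (LinearMap.ker A.toEuclideanLin) (C s) :
        EuclideanSpace ℝ (Fin n)))
    (hpos : ∀ s, 0 ≤ lam s)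
    (s₀ : ℝ) (hZ' : deriv Z s₀ ≠ 0) :
    (∫ s in Set.Ioi s₀, lam s) ≤ -Real.log ‖deriv Z s₀‖ ∧
    Tendsto lam atTop (nhds 0) := by
  classical
  set K : Submodule ℝ (EuclideanSpace ℝ (Fin n)) := LinearMap.ker A.toEuclideanLin with hK
  set P : EuclideanSpace ℝ (Fin n) →L[ℝ] EuclideanSpace ℝ (Fin n) :=
    K.subtypeL.comp (K.orthogonalProjectionOnto) with hP
  have hZeq : Z = fun s => P (C s) := funext fun s => hZ s
  -- smoothness facts
  have hCd : Differentiable ℝ C := hC.differentiable two_ne_zero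
  have hC1 : ContDiff ℝ 1 (deriv C) := by
    have h2 : ContDiff ℝ (1 + 1) C := by
      convert hC using 2
      exact one_add_one_eq_two
    exact (contDiff_succ_iff_deriv.mp h2).2.2
  have hC'd : Differentiable ℝ (deriv C) := hC1.differentiable one_ne_zero
  have hC'cont : Continuous (deriv C) := hC'd.continuous
  -- adjoint of A
  have hadj : LinearMap.adjoint A.toEuclideanLin = -A.toEuclideanLin := by
    rw [← Matrix.toEuclideanLin_conjTranspose_eq_adjoint]
    have : A.conjTranspose = -A := by
      ext i j
      rw [Matrix.conjTranspose_apply, star_trivial, show A j i = Aᵀ i j from rfl, hA]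
    rw [this]
    simp
  -- P kills the range of A
  have hPA : ∀ x, P (A.toEuclideanLin x) = 0 := by
    intro x
    have hmem : A.toEuclideanLin x ∈ Kᗮ := by
      rw [Submodule.mem_orthogonal]
      intro u hu
      have hu0 : A.toEuclideanLin u = 0 := hu
      have : ⟪u, A.toEuclideanLin x⟫ = ⟪LinearMap.adjoint A.toEuclideanLin u, x⟫ := by
        rw [LinearMap.adjoint_inner_left]
      rw [this, hadj]
      simp [hu0]
    have : K.orthogonalProjectionOnto (A.toEuclideanLin x) = 0 :=
      Submodule.orthogonalProjectionOnto_eq_zero_iff.mpr hmem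
    simp [hP, this]
  have hPnorm : ∀ v, ‖P v‖ ≤ ‖v‖ := by
    intro v
    have : ‖P v‖ = ‖K.orthogonalProjectionOnto v‖ := rfl
    rw [this]
    calc ‖K.orthogonalProjectionOnto v‖ ≤ ‖K.orthogonalProjectionOnto‖ * ‖v‖ :=
          (K.orthogonalProjectionOnto).le_opNorm v
      _ ≤ 1 * ‖v‖ := by
          apply mul_le_mul_of_nonneg_right K.orthogonalProjectionOnto_norm_le (norm_nonneg v)
      _ = ‖v‖ := one_mul _
  -- continuity of lam
  have hAcont : Continuous A.toEuclideanLin := A.toEuclideanLin.continuous_of_finiteDimensional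
  have hlameq : lam = fun s => -⟪deriv C s, A.toEuclideanLin (C s)⟫ := funext hlam
  have hlamcont : Continuous lam := by
    rw [hlameq]
    exact (hC'cont.inner (hAcont.comp hCd.continuous)).neg
  -- derivative of Z
  have hZder : ∀ s, HasDerivAt Z (P (deriv C s)) s := by
    intro s
    rw [hZeq]
    exact P.hasFDerivAt.comp_hasDerivAt s (hCd s).hasDerivAt
  set g : ℝ → EuclideanSpace ℝ (Fin n) := fun s => P (deriv C s) with hg
  have hgZ : deriv Z = g := funext fun s => (hZder s).deriv
  have hg0 : g s₀ ≠ 0 := by rw [← hgZ]; exact hZ'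
  have hgnorm : ∀ s, ‖g s‖ ≤ 1 := fun s => by
    calc ‖g s‖ ≤ ‖deriv C s‖ := hPnorm _
      _ = 1 := harc s
  -- the ODE for g
  have hg' : ∀ s, HasDerivAt g (lam s • g s) s := by
    intro s
    have h1 : HasDerivAt g (P (deriv (deriv C) s)) s :=
      P.hasFDerivAt.comp_hasDerivAt s (hC'd s).hasDerivAt
    have h2 : P (deriv (deriv C) s) = lam s • g s := by
      rw [heq s, map_add, hPA, zero_add, P.map_smul]
    rwa [h2] at h1
  -- integral function
  set F : ℝ → ℝ := fun s => ∫ t in s₀..s, lam t with hF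
  have hlamInt : ∀ a b : ℝ, IntervalIntegrable lam MeasureTheory.volume a b := fun a b =>
    hlamcont.intervalIntegrable a b
  have hFder : ∀ s, HasDerivAt F (lam s) s := by
    intro s
    exact intervalIntegral.integral_hasDerivAt_right (hlamInt s₀ s)
      (hlamcont.stronglyMeasurableAtFilter _ _) hlamcont.continuousAt
  -- the function e^{-F} • g is constant
  set w : ℝ → EuclideanSpace ℝ (Fin n) := fun s => Real.exp (-F s) • g s with hw
  have hw' : ∀ s, HasDerivAt w 0 s := by
    intro s
    have h1 : HasDerivAt (fun s => Real.exp (-F s)) (Real.exp (-F s) * (-lam s)) s :=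
      (hFder s).neg.exp
    have h2 := h1.smul (hg' s)
    have h3 : Real.exp (-F s) • (lam s • g s) + (Real.exp (-F s) * -lam s) • g s = 0 := by
      rw [smul_smul, mul_comm (Real.exp (-F s)) (-lam s), neg_mul, neg_smul,
        mul_comm (lam s), add_neg_cancel]
    rwa [h3] at h2
  have hwconst : ∀ s, w s = w s₀ :=
    fun s => is_const_of_deriv_eq_zero (fun x => (hw' x).differentiableAt)
      (fun x => (hw' x).deriv) s s₀
  have hws₀ : w s₀ = g s₀ := by
    simp only [hw, hF, intervalIntegral.integral_same, neg_zero, Real.exp_zero, one_smul]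
  have hgs : ∀ s, g s = Real.exp (F s) • g s₀ := by
    intro s
    have h1 : Real.exp (-F s) • g s = g s₀ := by rw [← hws₀]; exact hwconst s
    have := congrArg (fun v => Real.exp (F s) • v) h1
    simpa [smul_smul, ← Real.exp_add] using this
  -- norm bound
  have hr : 0 < ‖g s₀‖ := norm_pos_iff.mpr hg0
  have hFM : ∀ s, F s ≤ -Real.log ‖g s₀‖ := by
    intro s
    have h1 : Real.exp (F s) * ‖g s₀‖ ≤ 1 := by
      have := hgnorm s
      rwa [hgs s, norm_smul, Real.norm_eq_abs, abs_of_pos (Real.exp_pos _)] at this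
    have h2 : Real.log (Real.exp (F s) * ‖g s₀‖) ≤ 0 :=
      Real.log_nonpos (by positivity) h1
    rw [Real.log_mul (Real.exp_ne_zero _) (ne_of_gt hr), Real.log_exp] at h2
    linarith
  -- integrability on Ioi
  have hnormint : ∀ i : ℝ, (∫ x in s₀..i, ‖lam x‖) ≤ -Real.log ‖g s₀‖ := by
    intro i
    have : (∫ x in s₀..i, ‖lam x‖) = F i := by
      apply intervalIntegral.integral_congr
      intro x _
      exact Real.norm_of_nonneg (hpos x)
    rw [this]; exact hFM i
  have hInt : MeasureTheory.IntegrableOn lam (Set.Ioi s₀) := by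
    apply MeasureTheory.integrableOn_Ioi_of_intervalIntegral_norm_bounded
      (-Real.log ‖g s₀‖) s₀ (fun i : ℝ => (hlamInt s₀ i).1) tendsto_id
    exact Filter.Eventually.of_forall hnormint
  have hIntLe : (∫ s in Set.Ioi s₀, lam s) ≤ -Real.log ‖g s₀‖ := by
    have htends := MeasureTheory.intervalIntegral_tendsto_integral_Ioi s₀ hInt tendsto_id
    exact le_of_tendsto htends (Filter.Eventually.of_forall fun i => hFM i)
  -- derivative of lam is nonpositive
  set L : EuclideanSpace ℝ (Fin n) →L[ℝ] EuclideanSpace ℝ (Fin n) :=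
    LinearMap.toContinuousLinearMap A.toEuclideanLin with hL
  have hLapp : ∀ x, L x = A.toEuclideanLin x := fun x => rfl
  have hanti : ∀ x : EuclideanSpace ℝ (Fin n), ⟪x, A.toEuclideanLin x⟫ = 0 := by
    intro x
    have h1 : ⟪A.toEuclideanLin x, x⟫ = ⟪x, LinearMap.adjoint A.toEuclideanLin x⟫ := by
      rw [LinearMap.adjoint_inner_right]
    rw [hadj] at h1
    have h2 : ⟪x, A.toEuclideanLin x⟫ = ⟪A.toEuclideanLin x, x⟫ := real_inner_comm _ _
    simp only [LinearMap.neg_apply, inner_neg_right] at h1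
    linarith [h2, h1]
  have hC''C' : ∀ s, ⟪deriv (deriv C) s, deriv C s⟫ = 0 := by
    intro s
    have hq : (fun s => ⟪deriv C s, deriv C s⟫) = fun _ : ℝ => (1 : ℝ) := by
      funext t
      rw [real_inner_self_eq_norm_sq, harc t, one_pow]
    have h1 : HasDerivAt (fun s => ⟪deriv C s, deriv C s⟫)
        (⟪deriv C s, deriv (deriv C) s⟫ + ⟪deriv (deriv C) s, deriv C s⟫) s :=
      HasDerivAt.inner ℝ ((hC'd s).hasDerivAt) ((hC'd s).hasDerivAt)
    rw [hq] at h1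
    have h2 : (⟪deriv C s, deriv (deriv C) s⟫ + ⟪deriv (deriv C) s, deriv C s⟫ : ℝ) = 0 :=
      h1.unique (hasDerivAt_const s (1 : ℝ))
    have h3 : ⟪deriv C s, deriv (deriv C) s⟫ = ⟪deriv (deriv C) s, deriv C s⟫ :=
      real_inner_comm _ _
    linarith
  have hlamder : ∀ s, HasDerivAt lam (-(‖deriv (deriv C) s‖ ^ 2)) s := by
    intro s
    have hACd : HasDerivAt (fun t => L (C t)) (L (deriv C s)) s :=
      L.hasFDerivAt.comp_hasDerivAt s (hCd s).hasDerivAt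
    have h1 : HasDerivAt (fun t => ⟪deriv C t, L (C t)⟫)
        (⟪deriv C s, L (deriv C s)⟫ + ⟪deriv (deriv C) s, L (C s)⟫) s :=
      HasDerivAt.inner ℝ ((hC'd s).hasDerivAt) hACd
    have h2 : (⟪deriv C s, L (deriv C s)⟫ : ℝ) = 0 := hanti _
    have h3 : (⟪deriv (deriv C) s, L (C s)⟫ : ℝ) = ‖deriv (deriv C) s‖ ^ 2 := by
      have hAc : L (C s) = deriv (deriv C) s - lam s • deriv C s := by
        rw [hLapp, heq s]; abel
      rw [hAc, inner_sub_right, real_inner_self_eq_norm_sq, real_inner_smul_right,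
        hC''C' s, mul_zero, sub_zero]
    have h4 : HasDerivAt (fun t => -⟪deriv C t, L (C t)⟫)
        (-(‖deriv (deriv C) s‖ ^ 2)) s := by
      have := h1.neg
      rwa [h2, h3, zero_add] at this
    have h5 : lam = fun t => -⟪deriv C t, L (C t)⟫ := by
      rw [hlameq]; rfl
    rw [h5]
    exact h4
  have hlamanti : Antitone lam :=
    antitone_of_deriv_nonpos (fun s => (hlamder s).differentiableAt)
      (fun s => by rw [(hlamder s).deriv]; exact neg_nonpos.mpr (by positivity))
  -- limit of lam
  have hbdd : BddBelow (Set.range lam) := ⟨0, fun x ⟨s, hs⟩ => hs ▸ hpos s⟩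
  have htend : Tendsto lam atTop (nhds (⨅ s, lam s)) := tendsto_atTop_ciInf hlamanti hbdd
  have hLinf0 : (⨅ s, lam s) = 0 := by
    have h0le : 0 ≤ ⨅ s, lam s := le_ciInf fun s => hpos s
    by_contra hne
    have hLpos : 0 < ⨅ s, lam s := lt_of_le_of_ne h0le (Ne.symm hne)
    have hconst : MeasureTheory.Integrable (fun _ : ℝ => (⨅ s, lam s))
        (MeasureTheory.volume.restrict (Set.Ioi s₀)) := by
      apply MeasureTheory.Integrable.mono' hInt MeasureTheory.aestronglyMeasurable_const
      apply MeasureTheory.ae_of_all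
      intro x
      rw [Real.norm_of_nonneg h0le]
      exact ciInf_le hbdd x
    rw [MeasureTheory.integrable_const_iff] at hconst
    rcases hconst with h | h
    · exact hne h
    · rw [MeasureTheory.isFiniteMeasure_restrict, Real.volume_Ioi] at h
      exact h rfl
  rw [hLinf0] at htend
  exact ⟨by rw [hgZ]; exact hIntLe, htend⟩
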